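/- Let (G,s,z,δ,k) be an instance of Short Restless Temporal Path with d(s,1) ≤ k and let T be the table defined from this instance. If T[u,t'] = k' < ∞ for a vertex appearance (u,t') with u incident to an edge of E_{t'}, then there is a δ-restless temporal s-u path of length k' in the temporal graph G^{u,t'} that arrives at u at some time in [t'−δ, t'] (for u = s and k' = 0 this is the trivial path of length 0). -/

import Mathlib

attribute [local instance] Classical.propDecidable

noncomputable section

/-- A temporal graph: a lifetime `tau` and, for each time step, a set of
undirected edges (unordered pairs of distinct vertices) over `V`;
edges exist only at time steps in `[1, tau]`. -/
structure TemporalGraph (V : Type*) where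
  tau : ℕ
  E : ℕ → Sym2 V → Prop
  time_mem : ∀ t e, E t e → 1 ≤ t ∧ t ≤ tau
  not_diag : ∀ t e, E t e → ¬ e.IsDiag

namespace TemporalGraph

variable {V : Type*}

/-- `G.IsPath s z m vs ts` : the sequence `(({vs (i-1), vs i}, ts i))_{i=1}^m` is a
temporal `s`-`z` path of length `m` in `G` (pairwise distinct vertices
`vs 0 = s, vs 1, …, vs m = z` and nondecreasing time stamps). -/
def IsPath (G : TemporalGraph V) (s z : V) (m : ℕ) (vs : ℕ → V) (ts : ℕ → ℕ) : Prop :=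
  vs 0 = s ∧ vs m = z ∧
  (∀ i j, i ≤ m → j ≤ m → i ≠ j → vs i ≠ vs j) ∧
  (∀ i, 1 ≤ i → i ≤ m → G.E (ts i) s(vs (i - 1), vs i)) ∧
  (∀ i, 1 ≤ i → i + 1 ≤ m → ts i ≤ ts (i + 1))

/-- `δ`-restless temporal path: consecutive time-edges are at most `δ` time steps apart. -/
def IsRestlessPath (G : TemporalGraph V) (δ : ℕ) (s z : V) (m : ℕ) (vs : ℕ → V)
    (ts : ℕ → ℕ) : Prop :=
  G.IsPath s z m vs ts ∧ ∀ i, 1 ≤ i → i + 1 ≤ m → ts (i + 1) ≤ ts i + δ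

/-- temporal `s`-`z` walk (vertices may repeat). -/
def IsWalk (G : TemporalGraph V) (s z : V) (m : ℕ) (vs : ℕ → V) (ts : ℕ → ℕ) : Prop :=
  vs 0 = s ∧ vs m = z ∧
  (∀ i, 1 ≤ i → i ≤ m → G.E (ts i) s(vs (i - 1), vs i)) ∧
  (∀ i, 1 ≤ i → i + 1 ≤ m → ts i ≤ ts (i + 1))

/-- `δ`-restless temporal walk. -/
def IsRestlessWalk (G : TemporalGraph V) (δ : ℕ) (s z : V) (m : ℕ) (vs : ℕ → V)
    (ts : ℕ → ℕ) : Prop :=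
  G.IsWalk s z m vs ts ∧ ∀ i, 1 ≤ i → i + 1 ≤ m → ts (i + 1) ≤ ts i + δ

/-- `G.dist z v t` : the minimum length of a temporal `v`-`z` path in `G` whose
departure time is at least `t`; `⊤` if no such path exists, and `0` for `v = z`. -/
def dist (G : TemporalGraph V) (z v : V) (t : ℕ) : ℕ∞ :=
  if v = z then 0
  else sInf {x : ℕ∞ | ∃ (m : ℕ) (vs : ℕ → V) (ts : ℕ → ℕ),
    G.IsPath v z m vs ts ∧ t ≤ ts 1 ∧ x = (m : ℕ∞)}

/-- The set `A_{a,t}^{b,t'}` of vertex appearances. -/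
def AreaAB (G : TemporalGraph V) (z a : V) (t : ℕ) (b : V) (t' : ℕ) : Set (V × ℕ) :=
  {w | G.dist z b t' < G.dist z w.1 w.2 ∧ G.dist z w.1 w.2 < G.dist z a t ∧
       t ≤ w.2 ∧ w.2 ≤ t'}

/-- The set `A^{b,t'}` of vertex appearances. -/
def AreaB (G : TemporalGraph V) (z b : V) (t' : ℕ) : Set (V × ℕ) :=
  {w | G.dist z b t' < G.dist z w.1 w.2 ∧ G.dist z w.1 w.2 < ⊤ ∧ w.2 ≤ t'}

/-- The temporal graph `G_{a,t}^{b,t'}`. -/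
def SubAB (G : TemporalGraph V) (z : V) (δ : ℕ) (a : V) (t : ℕ) (b : V) (t' : ℕ) :
    TemporalGraph V where
  tau := G.tau
  E := fun u e =>
    (G.E u e ∧ ∃ x y, e = s(x, y) ∧ (x, u) ∈ G.AreaAB z a t b t' ∧
        (y, u) ∈ G.AreaAB z a t b t') ∨
    (G.E u e ∧ u = t ∧ ∃ x, e = s(a, x) ∧ (x, t) ∈ G.AreaAB z a t b t') ∨
    (G.E u e ∧ t' ≤ u + δ ∧ ∃ x, e = s(x, b) ∧
        ((x, u) ∈ G.AreaAB z a t b t' ∨ (x = a ∧ u = t)))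
  time_mem := by rintro u e (⟨h, -⟩ | ⟨h, -⟩ | ⟨h, -⟩) <;> exact G.time_mem u e h
  not_diag := by rintro u e (⟨h, -⟩ | ⟨h, -⟩ | ⟨h, -⟩) <;> exact G.not_diag u e h

/-- The temporal graph `G^{b,t'}`. -/
def SubB (G : TemporalGraph V) (z : V) (δ : ℕ) (b : V) (t' : ℕ) : TemporalGraph V where
  tau := G.tau
  E := fun u e =>
    (G.E u e ∧ ∃ x y, e = s(x, y) ∧ (x, u) ∈ G.AreaB z b t' ∧ (y, u) ∈ G.AreaB z b t') ∨
    (G.E u e ∧ t' ≤ u + δ ∧ ∃ x, e = s(x, b) ∧ (x, u) ∈ G.AreaB z b t')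
  time_mem := by rintro u e (⟨h, -⟩ | ⟨h, -⟩) <;> exact G.time_mem u e h
  not_diag := by rintro u e (⟨h, -⟩ | ⟨h, -⟩) <;> exact G.not_diag u e h

/-- The vertex set of a temporal graph: all endpoints of its time-edges. -/
def vertexSet (G : TemporalGraph V) : Set V := {x | ∃ u e, G.E u e ∧ x ∈ e}

/-- Minimum length of a `δ`-restless temporal `a`-`b` path in `G` (`⊤` if none). -/
def restlessDist (G : TemporalGraph V) (δ : ℕ) (a b : V) : ℕ∞ :=
  sInf {x : ℕ∞ | ∃ m vs ts, G.IsRestlessPath δ a b m vs ts ∧ x = (m : ℕ∞)}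

/-- The base case of the table `T`: the value `T[u,t']` when `d(s,1) - d(u,t') ≤ ℓ`. -/
def tableBase (G : TemporalGraph V) (s z : V) (δ ℓ : ℕ) (u : V) (t' : ℕ) : ℕ∞ :=
  if u = s then 0
  else if 1 ≤ restlessDist (G.SubB z δ u t') δ s u ∧
          restlessDist (G.SubB z δ u t') δ s u ≤ (2 * ℓ : ℕ)
    then restlessDist (G.SubB z δ u t') δ s u
    else ⊤

/-- Fuelled version of the recursively defined table `T` (the fuel is an upper
bound on the recursion depth, which strictly decreases along the recursion of
the table via `d(s,1) - d(·,·)`). -/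
def tableFuel (G : TemporalGraph V) (s z : V) (δ ℓ : ℕ) : ℕ → V → ℕ → ℕ∞
  | 0, u, t' => tableBase G s z δ ℓ u t'
  | n + 1, u, t' =>
    if G.dist z s 1 - G.dist z u t' ≤ (ℓ : ℕ∞) then tableBase G s z δ ℓ u t'
    else sInf (insert ⊤ {x : ℕ∞ | ∃ (v : V) (t ℓ' : ℕ),
      1 ≤ t ∧ t ≤ t' ∧ (∃ e, G.E t e ∧ v ∈ e) ∧
      G.dist z u t' < G.dist z v t ∧ G.dist z v t ≤ G.dist z u t' + (ℓ : ℕ∞) + 1 ∧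
      1 ≤ ℓ' ∧ ℓ' ≤ 2 * ℓ + 1 ∧
      restlessDist (G.SubAB z δ v t u t') δ v u = (ℓ' : ℕ∞) ∧
      x = tableFuel G s z δ ℓ n v t + (ℓ' : ℕ∞)})

/-- The table `T` of the dynamic program, for the instance `(G,s,z,δ,k)`
(with `ℓ := k - d(s,1)`). -/
def table (G : TemporalGraph V) (s z : V) (δ k : ℕ) (u : V) (t' : ℕ) : ℕ∞ :=
  tableFuel G s z δ (k - (G.dist z s 1).toNat) ((G.dist z s 1).toNat + 1) u t'

/-- `vs i` is a distance separator of the temporal `s`-`z` path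
`(({vs (i-1), vs i}, ts i))_{i=1}^k` (with the convention `ts (k+1) = ts k`). -/
def IsDistSep (G : TemporalGraph V) (z : V) (k : ℕ) (vs : ℕ → V) (ts : ℕ → ℕ)
    (i : ℕ) : Prop :=
  (∀ j, j < i → G.dist z (vs i) (ts (i + 1)) < G.dist z (vs j) (ts (j + 1))) ∧
  (∀ j, i < j → j ≤ k → G.dist z (vs j) (ts (j + 1)) < G.dist z (vs i) (ts (i + 1)))

/-- The underlying (static) graph of a temporal graph. -/
def underlying (G : TemporalGraph V) : SimpleGraph V where
  Adj x y := ∃ t, G.E t s(x, y)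
  symm := by
    constructor
    rintro x y ⟨t, h⟩
    exact ⟨t, by rwa [Sym2.eq_swap]⟩
  loopless := by
    constructor
    rintro x ⟨t, h⟩
    exact G.not_diag t _ h (by simp)

/-- The set of non-isolated vertex appearances of `G`. -/
def NonIsolated (G : TemporalGraph V) : Set (V × ℕ) := {p | ∃ e, G.E p.2 e ∧ p.1 ∈ e}

/-- The weighted arcs of the auxiliary directed graph `D` (for destination `z`):
`DArc G z x y w` means there is an arc from `x` to `y` of weight `w`.
`Sum.inl ()` is the special vertex `z` of `D`; `Sum.inr (v, t)` is the vertex `v_t`. -/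
def DArc (G : TemporalGraph V) (z : V) : Unit ⊕ V × ℕ → Unit ⊕ V × ℕ → ℕ → Prop
  | Sum.inr (v, ta), Sum.inr (u, tb), w =>
      (w = 1 ∧ ta = tb ∧ v ≠ u ∧ G.E ta s(v, u)) ∨
      (w = 0 ∧ v = u ∧ (v, ta) ∈ G.NonIsolated ∧ (v, tb) ∈ G.NonIsolated ∧ tb < ta ∧
        ∀ t'', tb < t'' → t'' < ta → (v, t'') ∉ G.NonIsolated)
  | Sum.inl _, Sum.inr (u, tb), w =>
      w = 0 ∧ u = z ∧ (z, tb) ∈ G.NonIsolated ∧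
        ∀ t'', (z, t'') ∈ G.NonIsolated → t'' ≤ tb
  | _, _, _ => False

/-- The minimum total arc weight of a directed path in `D` from the special
vertex `z` to the vertex `v_t` (`⊤` if `v_t` is not reachable from `z`). -/
def dMinWeight (G : TemporalGraph V) (z v : V) (t : ℕ) : ℕ∞ :=
  sInf {x : ℕ∞ | ∃ (n : ℕ) (w : ℕ → Unit ⊕ V × ℕ) (wt : ℕ → ℕ),
    w 0 = Sum.inl () ∧ w n = Sum.inr (v, t) ∧
    (∀ i j, i ≤ n → j ≤ n → i ≠ j → w i ≠ w j) ∧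
    (∀ i, i < n → DArc G z (w i) (w (i + 1)) (wt i)) ∧
    x = ∑ i ∈ Finset.range n, (wt i : ℕ∞)}

end TemporalGraph

open TemporalGraph

namespace TemporalGraph

variable {V : Type*}

lemma sInf_eq_coe_mem {S : Set ℕ∞} {k : ℕ} (h : sInf S = (k : ℕ∞)) : (k : ℕ∞) ∈ S := by
  have h1 : sInf S < ((k + 1 : ℕ) : ℕ∞) := by
    rw [h]; exact_mod_cast Nat.lt_succ_self k
  obtain ⟨a, haS, ha⟩ := sInf_lt_iff.mp h1
  have h2 : (k : ℕ∞) ≤ a := h ▸ sInf_le haS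
  have hat : a ≠ ⊤ := ne_top_of_lt ha
  lift a to ℕ using hat
  have : a = k := by exact_mod_cast le_antisymm (by exact_mod_cast Nat.lt_succ_iff.mp (by exact_mod_cast ha)) (by exact_mod_cast h2)
  rwa [this] at haS

lemma dist_self (G : TemporalGraph V) (z : V) (t : ℕ) : G.dist z z t = 0 := by
  simp [dist]

lemma dist_mono (G : TemporalGraph V) (z v : V) {t1 t2 : ℕ} (h : t1 ≤ t2) :
    G.dist z v t1 ≤ G.dist z v t2 := by
  unfold dist
  split
  · exact le_refl _
  · apply sInf_le_sInf
    rintro x ⟨m, vs, ts, hp, ht, hx⟩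
    exact ⟨m, vs, ts, hp, le_trans h ht, hx⟩

lemma ts_mono (G : TemporalGraph V) {s z : V} {m : ℕ} {vs : ℕ → V} {ts : ℕ → ℕ}
    (hp : G.IsPath s z m vs ts) {i j : ℕ} (hi : 1 ≤ i) (hij : i ≤ j) (hj : j ≤ m) :
    ts i ≤ ts j := by
  obtain ⟨-, -, -, -, hmono⟩ := hp
  induction j with
  | zero => omega
  | succ n ih =>
    rcases Nat.lt_or_ge i (n+1) with h' | h'
    · exact le_trans (ih (by omega) (by omega)) (hmono n (by omega) (by omega))
    · have : i = n + 1 := by omega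
      rw [this]

end TemporalGraph
namespace TemporalGraph

variable {V : Type*}

lemma dist_le (G : TemporalGraph V) (z v : V) (t : ℕ) {m : ℕ} {vs : ℕ → V} {ts : ℕ → ℕ}
    (hp : G.IsPath v z m vs ts) (h1 : t ≤ ts 1) : G.dist z v t ≤ (m : ℕ∞) := by
  unfold dist
  split
  · exact zero_le
  · exact sInf_le ⟨m, vs, ts, hp, h1, rfl⟩

lemma dist_exists_path (G : TemporalGraph V) {z v : V} {t : ℕ} {L : ℕ}
    (h : G.dist z v t = (L : ℕ∞)) :
    ∃ vs ts, G.IsPath v z L vs ts ∧ t ≤ ts 1 := by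
  by_cases hvz : v = z
  · have hL : (L : ℕ∞) = 0 := by rw [← h, dist, if_pos hvz]
    have : L = 0 := by exact_mod_cast hL
    subst this; subst hvz
    exact ⟨fun _ => v, fun _ => t, ⟨rfl, rfl, fun i j hi hj hij => by omega,
      fun i hi him => by omega, fun i hi him => by omega⟩, le_refl t⟩
  · rw [dist, if_neg hvz] at h
    obtain ⟨m, vs, ts, hp, ht, hx⟩ := sInf_eq_coe_mem h
    have : m = L := by exact_mod_cast hx.symm
    subst this
    exact ⟨vs, ts, hp, ht⟩

lemma dist_adj_le (G : TemporalGraph V) (z : V) {x v : V} {τ : ℕ}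
    (he : G.E τ s(x, v)) (hxv : x ≠ v) :
    G.dist z x τ ≤ G.dist z v τ + 1 := by
  by_cases hxz : x = z
  · subst hxz; rw [dist_self]; exact zero_le
  rcases eq_or_ne (G.dist z v τ) ⊤ with hv | hv
  · rw [hv]; exact le_top
  obtain ⟨L, hL⟩ : ∃ L : ℕ, G.dist z v τ = (L : ℕ∞) := by
    lift G.dist z v τ to ℕ using hv with L; exact ⟨L, rfl⟩
  obtain ⟨vs, ts, hp, hdep⟩ := dist_exists_path G hL
  obtain ⟨hv0, hvL, hdist, hedge, hmono⟩ := hp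
  by_cases hmem : ∃ i, i ≤ L ∧ vs i = x
  · -- take the suffix from the first occurrence
    obtain ⟨i, hiL, hix⟩ := hmem
    have hi1 : 1 ≤ i := by
      by_contra h0
      have : i = 0 := by omega
      rw [this, hv0] at hix
      exact hxv hix.symm
    have hiL' : i < L := by
      by_contra h'
      have : i = L := by omega
      rw [this, hvL] at hix
      exact hxz hix.symm
    have hsuffix : G.IsPath x z (L - i) (fun j => vs (i + j)) (fun j => ts (i + j)) := by
      refine ⟨by simpa using hix, by simpa [Nat.add_sub_cancel' (le_of_lt hiL')] using hvL,
        fun a b ha hb hab => hdist (i+a) (i+b) (by omega) (by omega) (by omega),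
        fun j hj hjm => ?_, fun j hj hjm => ?_⟩
      · have := hedge (i + j) (by omega) (by omega)
        have harith : i + j - 1 = i + (j - 1) := by omega
        rwa [harith] at this
      · have := hmono (i + j) (by omega) (by omega)
        show ts (i + j) ≤ ts (i + (j + 1))
        rwa [show i + (j+1) = (i + j) + 1 by omega]
    have hdep' : τ ≤ ts (i + 1) :=
      le_trans hdep (ts_mono G ⟨hv0, hvL, hdist, hedge, hmono⟩ le_rfl (by omega) (by omega))
    calc G.dist z x τ ≤ ((L - i : ℕ) : ℕ∞) := dist_le G z x τ hsuffix hdep'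
      _ ≤ G.dist z v τ + 1 := by
          rw [hL]
          calc ((L - i : ℕ) : ℕ∞) ≤ (L : ℕ∞) := by exact_mod_cast Nat.sub_le L i
            _ ≤ (L : ℕ∞) + 1 := le_self_add
  · push_neg at hmem
    -- prepend the edge
    set vs' : ℕ → V := fun j => if j = 0 then x else vs (j - 1) with hvs'
    set ts' : ℕ → ℕ := fun j => if j ≤ 1 then τ else ts (j - 1) with hts'
    have hpath : G.IsPath x z (L + 1) vs' ts' := by
      refine ⟨by simp [hvs'], by simp [hvs', hvL], ?_, ?_, ?_⟩
      · intro a b ha hb hab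
        simp only [hvs']
        rcases Nat.eq_zero_or_pos a with h0 | h0 <;> rcases Nat.eq_zero_or_pos b with h0' | h0'
        · omega
        · subst h0; simp only [if_pos rfl, if_neg (by omega : b ≠ 0)]
          exact fun h => hmem (b-1) (by omega) h.symm
        · subst h0'; simp only [if_pos rfl, if_neg (by omega : a ≠ 0)]
          exact fun h => hmem (a-1) (by omega) h
        · simp only [if_neg (by omega : a ≠ 0), if_neg (by omega : b ≠ 0)]
          exact hdist (a-1) (b-1) (by omega) (by omega) (by omega)
      · intro i hi him
        rcases Nat.lt_or_ge i 2 with h2 | h2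
        · have : i = 1 := by omega
          subst this
          simpa [hvs', hts', hv0] using he
        · have := hedge (i - 1) (by omega) (by omega)
          simp only [hvs', hts', if_neg (by omega : ¬ i ≤ 1), if_neg (by omega : i ≠ 0),
            if_neg (by omega : i - 1 ≠ 0)]
          rwa [show i - 1 - 1 = i - 1 - 1 from rfl, show (i : ℕ) - 1 = i - 1 from rfl,
            show i - 1 - 1 = i - 2 by omega, show i - 2 = i - 1 - 1 by omega]
      · intro i hi him
        rcases Nat.lt_or_ge i 2 with h2 | h2
        · have : i = 1 := by omega
          subst this
          simpa [hts'] using hdep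
        · have := hmono (i - 1) (by omega) (by omega)
          simp only [hts', if_neg (by omega : ¬ i ≤ 1), if_neg (by omega : ¬ i + 1 ≤ 1)]
          rwa [show i - 1 + 1 = i + 1 - 1 by omega] at this
    have hdep' : τ ≤ ts' 1 := by simp [hts']
    calc G.dist z x τ ≤ ((L + 1 : ℕ) : ℕ∞) := dist_le G z x τ hpath hdep'
      _ = G.dist z v τ + 1 := by rw [hL]; push_cast; ring

end TemporalGraph
namespace TemporalGraph

variable {V : Type*}

lemma arrival (G : TemporalGraph V) {z s u : V} {δ t' m : ℕ} {vs : ℕ → V} {ts : ℕ → ℕ}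
    (hm : 1 ≤ m) (hP : (G.SubB z δ u t').IsPath s u m vs ts) :
    t' ≤ ts m + δ ∧ ts m ≤ t' := by
  obtain ⟨hv0, hvm, hdist, hedge, hmono⟩ := hP
  have he := hedge m hm le_rfl
  rcases he with ⟨hE, x, y, hexy, hx, hy⟩ | ⟨hE, hδ', x, hex, hx⟩
  · exfalso
    have hu : u ∈ s(x, y) := by rw [← hexy, ← hvm]; exact Sym2.mem_mk_right _ _
    have hmem : (u, ts m) ∈ G.AreaB z u t' := by
      rcases Sym2.mem_iff.mp hu with h | h
      · rw [← h] at hx; exact hx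
      · rw [← h] at hy; exact hy
    obtain ⟨h1, h2, h3⟩ := hmem
    exact absurd (G.dist_mono z u h3) (not_le_of_gt h1)
  · exact ⟨hδ', hx.2.2⟩

lemma first_time (G : TemporalGraph V) {z v u : V} {δ t t' m : ℕ} {vs : ℕ → V}
    {ts : ℕ → ℕ} (hm : 1 ≤ m) (hvu : v ≠ u)
    (hP : (G.SubAB z δ v t u t').IsPath v u m vs ts) : ts 1 = t := by
  obtain ⟨hv0, hvm, hdist, hedge, hmono⟩ := hP
  have he := hedge 1 le_rfl hm
  simp only [Nat.sub_self] at he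
  have hnv : ∀ τ, ¬ ((v, τ) ∈ G.AreaAB z v t u t') := by
    rintro τ ⟨h1, h2, h3, h4⟩
    exact absurd (G.dist_mono z v h3) (not_le_of_gt h2)
  rcases he with ⟨hE, x, y, hexy, hx, hy⟩ | ⟨hE, ht1, x, hex, hx⟩ | ⟨hE, hδ', x, hex, hx⟩
  · exfalso
    have hu : v ∈ s(x, y) := by rw [← hexy, ← hv0]; exact Sym2.mem_mk_left _ _
    rcases Sym2.mem_iff.mp hu with h | h
    · rw [← h] at hx; exact hnv _ hx
    · rw [← h] at hy; exact hnv _ hy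
  · exact ht1
  · rw [hv0] at hex
    rcases Sym2.eq_iff.mp hex with ⟨h1, h2⟩ | ⟨h1, h2⟩
    · rcases hx with hx | ⟨hx1, hx2⟩
      · rw [← h1] at hx; exact absurd hx (hnv _)
      · exact hx2
    · exact absurd h1 hvu

lemma app1 (G : TemporalGraph V) {z s v : V} {δ t m : ℕ} {vs : ℕ → V} {ts : ℕ → ℕ}
    (hP : (G.SubB z δ v t).IsPath s v m vs ts) :
    ∀ i < m, ∃ τ, τ ≤ t ∧ (vs i, τ) ∈ G.AreaB z v t := by
  obtain ⟨hv0, hvm, hdist, hedge, hmono⟩ := hP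
  intro i him
  have he := hedge (i + 1) (by omega) (by omega)
  simp only [Nat.add_sub_cancel] at he
  rcases he with ⟨hE, x, y, hexy, hx, hy⟩ | ⟨hE, hδ', x, hex, hx⟩
  · have hu : vs i ∈ s(x, y) := by rw [← hexy]; exact Sym2.mem_mk_left _ _
    rcases Sym2.mem_iff.mp hu with h | h
    · rw [← h] at hx; exact ⟨ts (i+1), hx.2.2, hx⟩
    · rw [← h] at hy; exact ⟨ts (i+1), hy.2.2, hy⟩
  · rcases Sym2.eq_iff.mp hex with ⟨h1, h2⟩ | ⟨h1, h2⟩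
    · rw [← h1] at hx; exact ⟨ts (i+1), hx.2.2, hx⟩
    · exact absurd (h1.trans hvm.symm) (hdist i m (by omega) le_rfl (by omega))

lemma app2 (G : TemporalGraph V) {z v u : V} {δ t t' m : ℕ} {vs : ℕ → V} {ts : ℕ → ℕ}
    (hP : (G.SubAB z δ v t u t').IsPath v u m vs ts) :
    ∀ j, 1 ≤ j → j < m → ∃ τ, (vs j, τ) ∈ G.AreaAB z v t u t' := by
  obtain ⟨hv0, hvm, hdist, hedge, hmono⟩ := hP
  intro j hj hjm
  have he := hedge j hj (by omega)
  rcases he with ⟨hE, x, y, hexy, hx, hy⟩ | ⟨hE, ht1, x, hex, hx⟩ | ⟨hE, hδ', x, hex, hx⟩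
  · have hu : vs j ∈ s(x, y) := by rw [← hexy]; exact Sym2.mem_mk_right _ _
    rcases Sym2.mem_iff.mp hu with h | h
    · rw [← h] at hx; exact ⟨ts j, hx⟩
    · rw [← h] at hy; exact ⟨ts j, hy⟩
  · rcases Sym2.eq_iff.mp hex with ⟨h1, h2⟩ | ⟨h1, h2⟩
    · rw [← h2] at hx; exact ⟨t, hx⟩
    · exact absurd (h2.trans hv0.symm) (hdist j 0 (by omega) (by omega) (by omega))
  · rcases Sym2.eq_iff.mp hex with ⟨h1, h2⟩ | ⟨h1, h2⟩
    · exact absurd (h2.trans hvm.symm) (hdist j m (by omega) le_rfl (by omega))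
    · rcases hx with hx | ⟨hx1, hx2⟩
      · rw [← h2] at hx; exact ⟨ts j, hx⟩
      · exact absurd ((h2.trans hx1).trans hv0.symm)
          (hdist j 0 (by omega) (by omega) (by omega))

end TemporalGraph
lemma enat_lt_add_one (a b : ℕ∞) (hb : b ≠ ⊤) (h : a < b + 1) : a ≤ b := by
  rcases eq_or_ne a ⊤ with h'|h'
  · exfalso
    rw [h'] at h
    have : b + 1 ≠ ⊤ := by
      intro hh
      exact hb ((WithTop.add_eq_top.mp hh).resolve_right WithTop.one_ne_top)
    exact absurd (le_of_lt h) (by simp [this])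
  · lift a to ℕ using h'
    lift b to ℕ using hb
    exact_mod_cast Nat.lt_succ_iff.mp (by exact_mod_cast h)

namespace TemporalGraph

variable {V : Type*}

lemma areaB_mono (G : TemporalGraph V) {z v u : V} {t t' : ℕ} (htt' : t ≤ t')
    (hd : G.dist z u t' < G.dist z v t) {w : V × ℕ} (hw : w ∈ G.AreaB z v t) :
    w ∈ G.AreaB z u t' := ⟨lt_trans hd hw.1, hw.2.1, le_trans hw.2.2 htt'⟩

lemma areaAB_sub (G : TemporalGraph V) {z v u : V} {t t' : ℕ}
    (hfin : G.dist z v t ≠ ⊤) {w : V × ℕ} (hw : w ∈ G.AreaAB z v t u t') :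
    w ∈ G.AreaB z u t' := ⟨hw.1, lt_of_lt_of_le hw.2.1 (le_top.trans_eq (by simp)), hw.2.2.2⟩

lemma subB_mono (G : TemporalGraph V) {z v u : V} {δ t t' : ℕ} (htt' : t ≤ t')
    (hd : G.dist z u t' < G.dist z v t) (hfin : G.dist z v t ≠ ⊤) :
    ∀ τ e, (G.SubB z δ v t).E τ e → (G.SubB z δ u t').E τ e := by
  rintro τ e (⟨hE, x, y, hexy, hx, hy⟩ | ⟨hE, hδ', x, hex, hx⟩)
  · exact Or.inl ⟨hE, x, y, hexy, G.areaB_mono htt' hd hx, G.areaB_mono htt' hd hy⟩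
  · -- e = s(x, v) with (x, τ) ∈ AreaB z v t; show both endpoints in AreaB z u t'
    have hτt : τ ≤ t := hx.2.2
    have hxv : x ≠ v := by
      intro h
      rw [h] at hx
      exact absurd (G.dist_mono z v hτt) (not_le_of_gt hx.1)
    have hE' : G.E τ s(x, v) := by rwa [hex] at hE
    have hadj := G.dist_adj_le z hE' hxv
    have hvτ_fin : G.dist z v τ ≠ ⊤ :=
      fun h => hfin (top_le_iff.mp (h ▸ G.dist_mono z v hτt))
    have hvt_le : G.dist z v t ≤ G.dist z v τ :=
      enat_lt_add_one _ _ hvτ_fin (lt_of_lt_of_le hx.1 hadj)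
    refine Or.inl ⟨hE, x, v, hex, G.areaB_mono htt' hd hx, ?_⟩
    exact ⟨lt_of_lt_of_le hd hvt_le, lt_of_le_of_lt (G.dist_mono z v hτt) (lt_top_iff_ne_top.mpr hfin),
      le_trans hτt htt'⟩

lemma subAB_to_subB (G : TemporalGraph V) {z v u : V} {δ t t' : ℕ} (htt' : t ≤ t')
    (hd : G.dist z u t' < G.dist z v t) (hfin : G.dist z v t ≠ ⊤) :
    ∀ τ e, (G.SubAB z δ v t u t').E τ e → (G.SubB z δ u t').E τ e := by
  have hvB : (v, t) ∈ G.AreaB z u t' := ⟨hd, lt_top_iff_ne_top.mpr hfin, htt'⟩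
  rintro τ e (⟨hE, x, y, hexy, hx, hy⟩ | ⟨hE, hτ, x, hex, hx⟩ | ⟨hE, hδ', x, hex, hx⟩)
  · exact Or.inl ⟨hE, x, y, hexy, G.areaAB_sub hfin hx, G.areaAB_sub hfin hy⟩
  · subst hτ
    exact Or.inl ⟨hE, v, x, hex, hvB, G.areaAB_sub hfin hx⟩
  · refine Or.inr ⟨hE, hδ', x, hex, ?_⟩
    rcases hx with hx | ⟨hx1, hx2⟩
    · exact G.areaAB_sub hfin hx
    · subst hx1; subst hx2; exact hvB

end TemporalGraph
namespace TemporalGraph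

variable {V : Type*}

lemma concat (G : TemporalGraph V) {z s u v : V} {δ t t' k1 l' : ℕ}
    (hd : G.dist z u t' < G.dist z v t) (hfin : G.dist z v t ≠ ⊤) (htt' : t ≤ t')
    {vs1 : ℕ → V} {ts1 : ℕ → ℕ} {vs2 : ℕ → V} {ts2 : ℕ → ℕ} (hl1 : 1 ≤ l')
    (hP1 : (G.SubB z δ v t).IsRestlessPath δ s v k1 vs1 ts1)
    (harr : 1 ≤ k1 → t ≤ ts1 k1 + δ ∧ ts1 k1 ≤ t)
    (hP2 : (G.SubAB z δ v t u t').IsRestlessPath δ v u l' vs2 ts2) :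
    ∃ vs ts, (G.SubB z δ u t').IsRestlessPath δ s u (k1 + l') vs ts := by
  have hvu : v ≠ u := by
    intro h
    subst h
    exact absurd (G.dist_mono z v htt') (not_le_of_gt hd)
  obtain ⟨h10, h1k, h1dist, h1edge, h1mono⟩ := hP1.1
  have hr1 := hP1.2
  obtain ⟨h20, h2k, h2dist, h2edge, h2mono⟩ := hP2.1
  have hr2 := hP2.2
  have hts21 : ts2 1 = t := G.first_time hl1 hvu hP2.1
  have app1s := G.app1 hP1.1
  have app2s := G.app2 hP2.1
  have cross : ∀ i, i < k1 → ∀ j, 1 ≤ j → j ≤ l' → vs1 i ≠ vs2 j := by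
    intro i hi j hj1 hj2 heq
    obtain ⟨τ1, hτ1, hA1⟩ := app1s i hi
    rcases eq_or_lt_of_le hj2 with hjl | hjl
    · rw [heq, hjl, h2k] at hA1
      have : G.dist z u τ1 ≤ G.dist z u t' := G.dist_mono z u (le_trans hτ1 htt')
      exact absurd (lt_trans hd (lt_of_lt_of_le hA1.1 this)) (lt_irrefl _)
    · obtain ⟨τ2, hA2⟩ := app2s j hj1 hjl
      rw [heq] at hA1
      have hmono : G.dist z (vs2 j) τ1 ≤ G.dist z (vs2 j) τ2 :=
        G.dist_mono z _ (le_trans hτ1 hA2.2.2.1)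
      exact absurd (lt_trans (lt_of_lt_of_le hA1.1 hmono) hA2.2.1) (lt_irrefl _)
  let vs : ℕ → V := fun i => if i ≤ k1 then vs1 i else vs2 (i - k1)
  let ts : ℕ → ℕ := fun i => if i ≤ k1 then ts1 i else ts2 (i - k1)
  have hvsa : ∀ i, i ≤ k1 → vs i = vs1 i := fun i h => by simp only [vs, if_pos h]
  have hvsb : ∀ i, k1 < i → vs i = vs2 (i - k1) := fun i h =>
    by simp only [vs, if_neg (by omega : ¬ i ≤ k1)]
  have htsa : ∀ i, i ≤ k1 → ts i = ts1 i := fun i h => by simp only [ts, if_pos h]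
  have htsb : ∀ i, k1 < i → ts i = ts2 (i - k1) := fun i h =>
    by simp only [ts, if_neg (by omega : ¬ i ≤ k1)]
  refine ⟨vs, ts, ⟨?_, ?_, ?_, ?_, ?_⟩, ?_⟩
  · rw [hvsa 0 (by omega), h10]
  · rw [hvsb (k1 + l') (by omega), show k1 + l' - k1 = l' by omega, h2k]
  · intro i j hi hj hne
    by_cases hik : i ≤ k1 <;> by_cases hjk : j ≤ k1
    · rw [hvsa i hik, hvsa j hjk]
      exact h1dist i j hik hjk hne
    · rw [hvsa i hik, hvsb j (by omega)]
      rcases eq_or_lt_of_le hik with hik' | hik'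
      · rw [hik', h1k, ← h20]
        exact h2dist 0 (j - k1) (by omega) (by omega) (by omega)
      · exact cross i hik' (j - k1) (by omega) (by omega)
    · rw [hvsb i (by omega), hvsa j hjk]
      rcases eq_or_lt_of_le hjk with hjk' | hjk'
      · rw [hjk', h1k, ← h20]
        exact (h2dist 0 (i - k1) (by omega) (by omega) (by omega)).symm
      · exact (cross j hjk' (i - k1) (by omega) (by omega)).symm
    · rw [hvsb i (by omega), hvsb j (by omega)]
      exact h2dist (i - k1) (j - k1) (by omega) (by omega) (by omega)
  · intro i hi1 hik
    by_cases h : i ≤ k1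
    · rw [hvsa (i-1) (by omega), hvsa i h, htsa i h]
      exact G.subB_mono htt' hd hfin _ _ (h1edge i hi1 h)
    · rw [hvsb i (by omega), htsb i (by omega)]
      have hedge2 := h2edge (i - k1) (by omega) (by omega)
      by_cases h' : i - 1 ≤ k1
      · rw [hvsa (i-1) h']
        have hv12 : vs1 (i - 1) = vs2 (i - k1 - 1) := by
          rw [show i - 1 = k1 by omega, show i - k1 - 1 = 0 by omega, h1k, h20]
        rw [hv12]
        exact G.subAB_to_subB htt' hd hfin _ _ hedge2
      · rw [hvsb (i-1) (by omega), show i - 1 - k1 = i - k1 - 1 by omega]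
        exact G.subAB_to_subB htt' hd hfin _ _ hedge2
  · intro i hi1 hik
    by_cases h : i + 1 ≤ k1
    · rw [htsa i (by omega), htsa (i+1) h]
      exact h1mono i hi1 h
    · by_cases h' : i ≤ k1
      · rw [htsa i h', htsb (i+1) (by omega), show i + 1 - k1 = 1 by omega, hts21,
          show i = k1 by omega]
        exact (harr (by omega)).2
      · rw [htsb i (by omega), htsb (i+1) (by omega), show i + 1 - k1 = (i - k1) + 1 by omega]
        exact h2mono (i - k1) (by omega) (by omega)
  · intro i hi1 hik
    by_cases h : i + 1 ≤ k1
    · rw [htsa i (by omega), htsa (i+1) h]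
      exact hr1 i hi1 h
    · by_cases h' : i ≤ k1
      · rw [htsa i h', htsb (i+1) (by omega), show i + 1 - k1 = 1 by omega, hts21,
          show i = k1 by omega]
        exact (harr (by omega)).1
      · rw [htsb i (by omega), htsb (i+1) (by omega), show i + 1 - k1 = (i - k1) + 1 by omega]
        exact hr2 (i - k1) (by omega) (by omega)

end TemporalGraph
namespace TemporalGraph

variable {V : Type*}

lemma restlessDist_exists {G' : TemporalGraph V} {δ : ℕ} {a b : V} {m : ℕ}
    (h : restlessDist G' δ a b = (m : ℕ∞)) :
    ∃ vs ts, G'.IsRestlessPath δ a b m vs ts := by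
  obtain ⟨m', vs, ts, hp, hx⟩ := sInf_eq_coe_mem h
  have : m' = m := by exact_mod_cast hx.symm
  subst this
  exact ⟨vs, ts, hp⟩

lemma base_case (G : TemporalGraph V) (s z : V) (δ ℓ : ℕ) (u : V) (t' : ℕ) (k' : ℕ)
    (hT : G.tableBase s z δ ℓ u t' = (k' : ℕ∞)) :
    ∃ vs ts, (G.SubB z δ u t').IsRestlessPath δ s u k' vs ts ∧
      (1 ≤ k' → t' ≤ ts k' + δ ∧ ts k' ≤ t') := by
  unfold tableBase at hT
  by_cases hus : u = s
  · rw [if_pos hus] at hT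
    have hk0 : k' = 0 := by exact_mod_cast hT.symm
    subst hk0
    refine ⟨fun _ => s, fun _ => t', ⟨⟨rfl, hus.symm, fun i j hi hj hij => by omega,
      fun i hi him => by omega, fun i hi him => by omega⟩, fun i hi him => by omega⟩,
      fun h => by omega⟩
  · rw [if_neg hus] at hT
    split_ifs at hT with hcond
    · obtain ⟨vs, ts, hP⟩ := restlessDist_exists hT
      have hk1 : 1 ≤ k' := by
        have := hcond.1
        rw [hT] at this
        exact_mod_cast this
      exact ⟨vs, ts, hP, fun _ => G.arrival hk1 hP.1⟩
    · exact absurd hT.symm (by simp)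

lemma main (G : TemporalGraph V) (s z : V) (δ ℓ : ℕ) (n : ℕ) :
    ∀ (u : V) (t' : ℕ) (k' : ℕ), (∃ e, G.E t' e ∧ u ∈ e) →
    tableFuel G s z δ ℓ n u t' = (k' : ℕ∞) →
    ∃ vs ts, (G.SubB z δ u t').IsRestlessPath δ s u k' vs ts ∧
      (1 ≤ k' → t' ≤ ts k' + δ ∧ ts k' ≤ t') := by
  induction n with
  | zero =>
    intro u t' k' hinc hT
    rw [tableFuel] at hT
    exact base_case G s z δ ℓ u t' k' hT
  | succ n ih =>
    intro u t' k' hinc hT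
    rw [tableFuel] at hT
    split_ifs at hT with hcase
    · exact base_case G s z δ ℓ u t' k' hT
    · have hmem := sInf_eq_coe_mem hT
      rcases Set.mem_insert_iff.mp hmem with htop | hmem'
      · simp at htop
      obtain ⟨v, t, ℓ', h1t, htt', hincv, hdvu, hdvle, hl1, hl2, hrd, hx⟩ := hmem'
      have hut' : G.dist z u t' ≠ ⊤ := by
        intro h
        apply hcase
        rw [h, ENat.sub_top]
        exact zero_le
      have hvt : G.dist z v t ≠ ⊤ := by
        intro h
        have h2 : G.dist z u t' + (ℓ : ℕ∞) + 1 = ⊤ := top_le_iff.mp (h ▸ hdvle)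
        rcases WithTop.add_eq_top.mp h2 with h3 | h3
        · rcases WithTop.add_eq_top.mp h3 with h4 | h4
          · exact hut' h4
          · exact ENat.coe_ne_top ℓ h4
        · exact ENat.coe_ne_top 1 (by exact_mod_cast h3)
      have hTv : tableFuel G s z δ ℓ n v t ≠ ⊤ := by
        intro h
        rw [h, top_add] at hx
        exact absurd hx (by simp)
      obtain ⟨k1, hk1⟩ : ∃ k1 : ℕ, tableFuel G s z δ ℓ n v t = (k1 : ℕ∞) := by
        lift tableFuel G s z δ ℓ n v t to ℕ using hTv with k1
        exact ⟨k1, rfl⟩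
      have hkk : k1 + ℓ' = k' := by
        rw [hk1] at hx
        exact_mod_cast hx.symm
      obtain ⟨vs1, ts1, hP1, harr⟩ := ih v t k1 hincv hk1
      obtain ⟨vs2, ts2, hP2⟩ := restlessDist_exists hrd
      obtain ⟨vs, ts, hP⟩ := G.concat hdvu hvt htt' hl1 hP1 harr hP2
      rw [hkk] at hP
      exact ⟨vs, ts, hP, fun _ => G.arrival (by omega) hP.1⟩

end TemporalGraph
/-- If `T[u,t'] = k' < ∞` for a vertex appearance `(u,t')` with
`u` incident to an edge of `E_{t'}`, then there is a `δ`-restless temporal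
`s`-`u` path of length `k'` in the temporal graph `G^{u,t'}` arriving at `u`
at some time in `[t'-δ, t']` (for `u = s` and `k' = 0` it is the trivial path). -/
theorem statement2 {V : Type*} (G : TemporalGraph V) (s z : V) (δ k : ℕ)
    (hsz : s ≠ z) (hδ : 1 ≤ δ) (hk : 1 ≤ k)
    (hd : G.dist z s 1 ≤ (k : ℕ∞)) (u : V) (t' : ℕ)
    (hinc : ∃ e, G.E t' e ∧ u ∈ e) (k' : ℕ)
    (hT : G.table s z δ k u t' = (k' : ℕ∞)) :
    ∃ vs ts, (G.SubB z δ u t').IsRestlessPath δ s u k' vs ts ∧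
      (1 ≤ k' → t' ≤ ts k' + δ ∧ ts k' ≤ t') := by
  rw [table] at hT
  exact TemporalGraph.main G s z δ _ _ u t' k' hinc hT
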